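/- Given two norms p₀, p₁ on ℝ^d and 0 < t < 1, define p_t(v) = p₀(v)^{1−t} p₁(v)^t. Then the dual functional p_t*(v) = sup_{w ≠ 0} |⟨v,w⟩| / p_t(w) is a norm on ℝ^d. -/

import Mathlib

open scoped RealInnerProductSpace

/-- A norm as a plain function on ℝ^d. -/
def IsNormFun {d : ℕ} (p : EuclideanSpace ℝ (Fin d) → ℝ) : Prop :=
  (∀ u v, p (u + v) ≤ p u + p v) ∧ (∀ (a : ℝ) v, p (a • v) = |a| * p v) ∧
    (∀ v, p v = 0 → v = 0)

/-- The dual functional `q*(v) = sup_{w ≠ 0} |⟨v,w⟩| / q(w)`. -/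
noncomputable def dualFn {d : ℕ} (q : EuclideanSpace ℝ (Fin d) → ℝ)
    (v : EuclideanSpace ℝ (Fin d)) : ℝ :=
  ⨆ w : {w : EuclideanSpace ℝ (Fin d) // w ≠ 0}, |⟪v, (w : EuclideanSpace ℝ (Fin d))⟫| / q w

variable {d : ℕ}

lemma IsNormFun.zero {p : EuclideanSpace ℝ (Fin d) → ℝ} (h : IsNormFun p) : p 0 = 0 := by
  have := h.2.1 0 0
  simpa using this

lemma IsNormFun.nonneg {p : EuclideanSpace ℝ (Fin d) → ℝ} (h : IsNormFun p)
    (v : EuclideanSpace ℝ (Fin d)) : 0 ≤ p v := by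
  have h1 := h.1 v (-v)
  have h2 : p (-v) = p v := by
    have := h.2.1 (-1) v
    simpa using this
  have h3 : p (v + -v) = 0 := by simpa using h.zero
  linarith

lemma IsNormFun.pos {p : EuclideanSpace ℝ (Fin d) → ℝ} (h : IsNormFun p)
    {v : EuclideanSpace ℝ (Fin d)} (hv : v ≠ 0) : 0 < p v :=
  lt_of_le_of_ne (h.nonneg v) (fun hc => hv (h.2.2 v hc.symm))

lemma abs_apply_le_norm (v : EuclideanSpace ℝ (Fin d)) (i : Fin d) : |v i| ≤ ‖v‖ := by
  rw [EuclideanSpace.norm_eq, ← Real.sqrt_sq_eq_abs]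
  apply Real.sqrt_le_sqrt
  calc v i ^ 2 = ‖v i‖ ^ 2 := by rw [Real.norm_eq_abs, sq_abs]
    _ ≤ ∑ j, ‖v j‖ ^ 2 :=
      Finset.single_le_sum (f := fun j => ‖v j‖ ^ 2) (fun j _ => sq_nonneg _) (Finset.mem_univ i)

lemma sum_single_eq (v : EuclideanSpace ℝ (Fin d)) :
    ∑ i, v i • EuclideanSpace.single i (1 : ℝ) = v := by
  ext j
  rw [WithLp.ofLp_sum, Finset.sum_apply]
  simp [EuclideanSpace.single_apply, mul_ite, Finset.sum_ite_eq']

lemma IsNormFun.sum_le {p : EuclideanSpace ℝ (Fin d) → ℝ} (h : IsNormFun p)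
    {ι : Type*} (s : Finset ι) (f : ι → EuclideanSpace ℝ (Fin d)) :
    p (∑ i ∈ s, f i) ≤ ∑ i ∈ s, p (f i) := by
  classical
  induction s using Finset.cons_induction with
  | empty => simpa using le_of_eq h.zero
  | cons a s ha ih =>
    rw [Finset.sum_cons, Finset.sum_cons]
    exact (h.1 _ _).trans (by linarith)

lemma IsNormFun.exists_upper {p : EuclideanSpace ℝ (Fin d) → ℝ} (h : IsNormFun p) :
    ∃ C : ℝ, 0 ≤ C ∧ ∀ v, p v ≤ C * ‖v‖ := by
  refine ⟨∑ i, p (EuclideanSpace.single i (1 : ℝ)), Finset.sum_nonneg fun i _ => h.nonneg _,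
    fun v => ?_⟩
  calc p v = p (∑ i, v i • EuclideanSpace.single i (1 : ℝ)) := by rw [sum_single_eq]
    _ ≤ ∑ i, p (v i • EuclideanSpace.single i (1 : ℝ)) := h.sum_le _ _
    _ = ∑ i, |v i| * p (EuclideanSpace.single i (1 : ℝ)) := by
        simp only [h.2.1]
    _ ≤ ∑ i, ‖v‖ * p (EuclideanSpace.single i (1 : ℝ)) :=
        Finset.sum_le_sum fun i _ =>
          mul_le_mul_of_nonneg_right (abs_apply_le_norm v i) (h.nonneg _)
    _ = (∑ i, p (EuclideanSpace.single i (1 : ℝ))) * ‖v‖ := by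
        rw [← Finset.mul_sum, mul_comm]

lemma IsNormFun.continuous {p : EuclideanSpace ℝ (Fin d) → ℝ} (h : IsNormFun p) :
    Continuous p := by
  obtain ⟨C, hC0, hC⟩ := h.exists_upper
  have key : ∀ u v, |p u - p v| ≤ C * ‖u - v‖ := by
    intro u v
    have h1 : p u ≤ p v + p (u - v) := by
      have := h.1 v (u - v)
      simpa using this
    have h2 : p v ≤ p u + p (u - v) := by
      have h3 := h.1 u (v - u)
      have h4 : p (v - u) = p (u - v) := by
        have := h.2.1 (-1) (u - v)
        simpa [neg_sub] using this
      simp only [add_sub_cancel] at h3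
      linarith
    have := hC (u - v)
    rw [abs_sub_le_iff]
    constructor <;> linarith
  rw [Metric.continuous_iff]
  intro v ε hε
  by_cases hC0' : C = 0
  · exact ⟨1, one_pos, fun u _ => by
      have := key u v
      rw [hC0', zero_mul] at this
      simpa [Real.dist_eq] using lt_of_le_of_lt this hε⟩
  · have hCpos : 0 < C := lt_of_le_of_ne hC0 (Ne.symm hC0')
    refine ⟨ε / C, div_pos hε hCpos, fun u hu => ?_⟩
    have h1 := key u v
    have h2 : C * dist u v < C * (ε / C) := by
      exact mul_lt_mul_of_pos_left hu hCpos
    rw [mul_div_cancel₀ _ hC0'] at h2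
    rw [dist_eq_norm] at h2
    calc dist (p u) (p v) = |p u - p v| := Real.dist_eq _ _
      _ ≤ C * ‖u - v‖ := h1
      _ < ε := h2

lemma IsNormFun.exists_lower {p : EuclideanSpace ℝ (Fin d) → ℝ} (h : IsNormFun p) :
    ∃ c : ℝ, 0 < c ∧ ∀ v, c * ‖v‖ ≤ p v := by
  by_cases hd : ∀ v : EuclideanSpace ℝ (Fin d), v = 0
  · exact ⟨1, one_pos, fun v => by rw [hd v]; simp [h.zero]⟩
  push_neg at hd
  obtain ⟨v₀, hv₀⟩ := hd
  have hsne : (Metric.sphere (0 : EuclideanSpace ℝ (Fin d)) 1).Nonempty := by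
    refine ⟨‖v₀‖⁻¹ • v₀, ?_⟩
    simp [norm_smul, abs_inv, inv_mul_cancel₀ (norm_ne_zero_iff.mpr hv₀)]
  obtain ⟨w₀, hw₀mem, hw₀⟩ :=
    (isCompact_sphere (0 : EuclideanSpace ℝ (Fin d)) 1).exists_isMinOn hsne
      h.continuous.continuousOn
  have hw₀ne : w₀ ≠ 0 := by
    intro hc
    rw [mem_sphere_iff_norm, hc, sub_zero, norm_zero] at hw₀mem
    exact one_ne_zero hw₀mem.symm
  refine ⟨p w₀, h.pos hw₀ne, fun v => ?_⟩
  by_cases hv : v = 0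
  · simp [hv, h.zero]
  · have hnv : (0 : ℝ) < ‖v‖ := norm_pos_iff.mpr hv
    have hmem : ‖v‖⁻¹ • v ∈ Metric.sphere (0 : EuclideanSpace ℝ (Fin d)) 1 := by
      simp [norm_smul, abs_inv, inv_mul_cancel₀ hnv.ne']
    have h1 : p w₀ ≤ p (‖v‖⁻¹ • v) := hw₀ hmem
    have h2 : p (‖v‖⁻¹ • v) = ‖v‖⁻¹ * p v := by
      rw [h.2.1]
      congr 1
      rw [abs_inv, abs_of_nonneg (norm_nonneg v)]
    rw [h2] at h1
    calc p w₀ * ‖v‖ ≤ (‖v‖⁻¹ * p v) * ‖v‖ := by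
          exact mul_le_mul_of_nonneg_right h1 (norm_nonneg v)
      _ = p v := by field_simp

/-- For norms `p₀, p₁` on ℝ^d and `0 < t < 1`, the dual functional of the geometric
mean `p_t(v) = p₀(v)^{1-t} p₁(v)^t` is a norm on ℝ^d. -/
theorem dual_of_geometric_mean_is_norm (d : ℕ)
    (p₀ p₁ : EuclideanSpace ℝ (Fin d) → ℝ) (h₀ : IsNormFun p₀) (h₁ : IsNormFun p₁)
    (t : ℝ) (ht0 : 0 < t) (ht1 : t < 1) :
    IsNormFun (dualFn (fun v => p₀ v ^ (1 - t) * p₁ v ^ t)) := by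
  set q : EuclideanSpace ℝ (Fin d) → ℝ := fun v => p₀ v ^ (1 - t) * p₁ v ^ t with hq
  have hqnonneg : ∀ v, 0 ≤ q v := fun v =>
    mul_nonneg (Real.rpow_nonneg (h₀.nonneg v) _) (Real.rpow_nonneg (h₁.nonneg v) _)
  have hqpos : ∀ v, v ≠ 0 → 0 < q v := fun v hv =>
    mul_pos (Real.rpow_pos_of_pos (h₀.pos hv) _) (Real.rpow_pos_of_pos (h₁.pos hv) _)
  obtain ⟨c₀, hc₀, hl₀⟩ := h₀.exists_lower
  obtain ⟨c₁, hc₁, hl₁⟩ := h₁.exists_lower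
  set c : ℝ := c₀ ^ (1 - t) * c₁ ^ t with hc
  have hcpos : 0 < c :=
    mul_pos (Real.rpow_pos_of_pos hc₀ _) (Real.rpow_pos_of_pos hc₁ _)
  have hql : ∀ v, c * ‖v‖ ≤ q v := by
    intro v
    by_cases hv : v = 0
    · simpa [hv] using hqnonneg 0
    · have hnv : (0 : ℝ) < ‖v‖ := norm_pos_iff.mpr hv
      have e1 : (c₀ * ‖v‖) ^ (1 - t) ≤ p₀ v ^ (1 - t) :=
        Real.rpow_le_rpow (by positivity) (hl₀ v) (by linarith)
      have e2 : (c₁ * ‖v‖) ^ t ≤ p₁ v ^ t :=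
        Real.rpow_le_rpow (by positivity) (hl₁ v) ht0.le
      have e3 : (c₀ * ‖v‖) ^ (1 - t) * ((c₁ * ‖v‖) ^ t) = c * ‖v‖ := by
        rw [Real.mul_rpow hc₀.le (norm_nonneg v), Real.mul_rpow hc₁.le (norm_nonneg v)]
        have e4 : ‖v‖ ^ (1 - t) * ‖v‖ ^ t = ‖v‖ := by
          rw [← Real.rpow_add hnv]
          simp
        calc c₀ ^ (1 - t) * ‖v‖ ^ (1 - t) * (c₁ ^ t * ‖v‖ ^ t)
            = (c₀ ^ (1 - t) * c₁ ^ t) * (‖v‖ ^ (1 - t) * ‖v‖ ^ t) := by ring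
          _ = c * ‖v‖ := by rw [e4, hc]
      calc c * ‖v‖ = (c₀ * ‖v‖) ^ (1 - t) * ((c₁ * ‖v‖) ^ t) := e3.symm
        _ ≤ p₀ v ^ (1 - t) * p₁ v ^ t :=
            mul_le_mul e1 e2 (Real.rpow_nonneg (by positivity) _)
              (Real.rpow_nonneg (h₀.nonneg v) _)
  have hbdd : ∀ v, BddAbove (Set.range
      fun w : {w : EuclideanSpace ℝ (Fin d) // w ≠ 0} =>
        |⟪v, (w : EuclideanSpace ℝ (Fin d))⟫| / q w) := by
    intro v
    refine ⟨‖v‖ / c, ?_⟩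
    rintro x ⟨w, rfl⟩
    have hnw : (0 : ℝ) < ‖(w : EuclideanSpace ℝ (Fin d))‖ := norm_pos_iff.mpr w.2
    have h1 : |⟪v, (w : EuclideanSpace ℝ (Fin d))⟫| ≤ ‖v‖ * ‖(w : EuclideanSpace ℝ (Fin d))‖ :=
      abs_real_inner_le_norm v w
    calc |⟪v, (w : EuclideanSpace ℝ (Fin d))⟫| / q w
        ≤ (‖v‖ * ‖(w : EuclideanSpace ℝ (Fin d))‖) / (c * ‖(w : EuclideanSpace ℝ (Fin d))‖) :=
          div_le_div₀ (by positivity) h1 (by positivity) (hql w)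
      _ = ‖v‖ / c := mul_div_mul_right _ _ hnw.ne'
  by_cases hne : Nonempty {w : EuclideanSpace ℝ (Fin d) // w ≠ 0}
  · refine ⟨fun u v => ?_, fun a v => ?_, fun v hv0 => ?_⟩
    · unfold dualFn
      refine ciSup_le fun w => ?_
      have hqw : 0 < q w := hqpos _ w.2
      calc |⟪u + v, (w : EuclideanSpace ℝ (Fin d))⟫| / q w
          ≤ (|⟪u, (w : EuclideanSpace ℝ (Fin d))⟫| + |⟪v, (w : EuclideanSpace ℝ (Fin d))⟫|)
            / q w := by
            apply div_le_div_of_nonneg_right ?_ hqw.le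
            rw [inner_add_left]
            exact abs_add_le _ _
        _ = |⟪u, (w : EuclideanSpace ℝ (Fin d))⟫| / q w
            + |⟪v, (w : EuclideanSpace ℝ (Fin d))⟫| / q w := add_div _ _ _
        _ ≤ dualFn q u + dualFn q v :=
            add_le_add (le_ciSup (hbdd u) w) (le_ciSup (hbdd v) w)
    · unfold dualFn
      have key : ∀ w : {w : EuclideanSpace ℝ (Fin d) // w ≠ 0},
          |⟪a • v, (w : EuclideanSpace ℝ (Fin d))⟫| / q w
            = |a| * (|⟪v, (w : EuclideanSpace ℝ (Fin d))⟫| / q w) := by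
        intro w
        rw [real_inner_smul_left, abs_mul, mul_div_assoc]
      rw [iSup_congr key]
      exact (Real.mul_iSup_of_nonneg (abs_nonneg a) _).symm
    · by_contra hvne
      have hterm : 0 < |⟪v, v⟫| / q v := by
        apply div_pos ?_ (hqpos v hvne)
        rw [real_inner_self_eq_norm_sq, abs_of_nonneg (sq_nonneg _)]
        have : (0 : ℝ) < ‖v‖ := norm_pos_iff.mpr hvne
        positivity
      have h2 : |⟪v, v⟫| / q v ≤ dualFn q v :=
        le_ciSup (hbdd v) ⟨v, hvne⟩
      rw [hv0] at h2
      linarith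
  · have hempty : IsEmpty {w : EuclideanSpace ℝ (Fin d) // w ≠ 0} := not_nonempty_iff.mp hne
    have hall : ∀ v : EuclideanSpace ℝ (Fin d), v = 0 := by
      intro v
      by_contra hv
      exact hempty.false ⟨v, hv⟩
    have hzero : ∀ v, dualFn q v = 0 := fun v => Real.iSup_of_isEmpty _
    exact ⟨fun u v => by simp [hzero], fun a v => by simp [hzero], fun v _ => hall v⟩
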